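/- For every nonzero rational number r, the elliptic curve E_r over ℚ satisfies Z_{E_r/ℚ}(2) = Z_{E_r/ℚ}(4) = ℚ(i), where ℚ(i) denotes the subfield of the fixed algebraic closure of ℚ generated over ℚ by an element i with i² = −1. -/

import Mathlib

/-- The Weierstrass curve `E_r : y² = x(x² − 2(1−4r⁴)x + (1+4r⁴)²)` over `ℚ`. -/
def Er (r : ℚ) : WeierstrassCurve ℚ :=
  { a₁ := 0, a₂ := -2 * (1 - 4 * r ^ 4), a₃ := 0, a₄ := (1 + 4 * r ^ 4) ^ 2, a₆ := 0 }

open Classical in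
/-- The `m`-division field `Z_{E/K}(m)` of an elliptic curve `E` over a field `K` of
characteristic zero: the subfield of a fixed algebraic closure `K̄` of `K` generated over `K`
by the `x`- and `y`-coordinates of all affine points `P ∈ E(K̄)` with `m • P = 0`. -/
noncomputable def divisionField {K : Type*} [Field K] (E : WeierstrassCurve K) (m : ℕ) :
    IntermediateField K (AlgebraicClosure K) :=
  IntermediateField.adjoin K
    {c : AlgebraicClosure K | ∃ (x y : AlgebraicClosure K)
      (h : (E.baseChange (AlgebraicClosure K)).toAffine.Nonsingular x y),
      m • (WeierstrassCurve.Affine.Point.some x y h) =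
        (0 : (E.baseChange (AlgebraicClosure K)).toAffine.Point) ∧ (c = x ∨ c = y)}

open WeierstrassCurve.Affine IntermediateField

private noncomputable abbrev Kbar : Type _ := AlgebraicClosure ℚ

open Classical in
set_option maxHeartbeats 4000000 in
private lemma torsion_coords {r : ℚ} (hr : r ≠ 0) {i : Kbar} (hi : i ^ 2 = -1)
    {x y : Kbar} (h : ((Er r).baseChange Kbar).toAffine.Nonsingular x y)
    (h4 : 4 • (WeierstrassCurve.Affine.Point.some x y h) =
      (0 : ((Er r).baseChange Kbar).toAffine.Point)) :
    x ∈ adjoin ℚ {i} ∧ y ∈ adjoin ℚ {i} := by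
  set W : WeierstrassCurve.Affine Kbar := ((Er r).baseChange Kbar).toAffine with hW
  set p : Kbar := algebraMap ℚ Kbar r with hp
  set Qi : IntermediateField ℚ Kbar := adjoin ℚ {i} with hQi
  have hiQ : i ∈ Qi := by rw [hQi]; exact subset_adjoin ℚ {i} rfl
  have memconst : ∀ (a b : ℚ) (c : Kbar),
      algebraMap ℚ Kbar a + algebraMap ℚ Kbar b * i = c → c ∈ Qi := by
    intro a b c hc
    rw [← hc]
    exact add_mem (Qi.algebraMap_mem a) (mul_mem (Qi.algebraMap_mem b) hiQ)
  have hroot : ∀ s : Kbar, s ∈ Qi → y ^ 2 = s ^ 2 → y ∈ Qi := by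
    intro s hs h2
    rcases mul_eq_zero.mp (show (y - s) * (y + s) = (0 : Kbar) by linear_combination h2) with hc | hc
    · rw [sub_eq_zero.mp hc]; exact hs
    · rw [eq_neg_of_add_eq_zero_left hc]; exact neg_mem hs
  have ha₁ : W.a₁ = 0 := by simp [hW, Er]
  have ha₃ : W.a₃ = 0 := by simp [hW, Er]
  have ha₆ : W.a₆ = 0 := by simp [hW, Er]
  have ha₂ : W.a₂ = -2*(1-4*p^4) := by
    rw [hp, hW]
    simp only [WeierstrassCurve.baseChange, WeierstrassCurve.map_a₂, Er, map_neg, map_mul, map_sub,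
      map_one, map_ofNat, map_pow]
  have ha₄ : W.a₄ = (1+4*p^4)^2 := by
    rw [hp, hW]
    simp only [WeierstrassCurve.baseChange, WeierstrassCurve.map_a₄, Er, map_add, map_mul,
      map_one, map_ofNat, map_pow]
  have heq : y^2 = x^3 + (-2*(1-4*p^4))*x^2 + ((1+4*p^4)^2)*x := by
    have h1 := (W.equation_iff x y).mp h.1
    rw [ha₁, ha₂, ha₃, ha₄, ha₆] at h1
    linear_combination h1
  by_cases hy0 : y = 0
  · subst hy0
    refine ⟨?_, zero_mem Qi⟩
    have hx3 : x * (x - (4*i*p^2 + (-4)*p^4 + 1)) * (x - ((-4)*i*p^2 + (-4)*p^4 + 1)) = 0 := by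
      linear_combination (-1 : Kbar)*heq + ((-16)*x*p^4)*hi
    rcases mul_eq_zero.mp hx3 with h' | h'
    · rcases mul_eq_zero.mp h' with h'' | h''
      · rw [h'']; exact zero_mem Qi
      · have hxe : x = (4*i*p^2 + (-4)*p^4 + 1) := by linear_combination h''
        rw [hxe]; exact memconst ((-4)*r^4 + 1) (4*r^2) _ (by rw [hp]; simp only [map_add, map_sub, map_mul, map_pow, map_one, map_ofNat, map_neg, _root_.map_zero]; ring)
    · have hxe : x = ((-4)*i*p^2 + (-4)*p^4 + 1) := by linear_combination h'
      rw [hxe]; exact memconst ((-4)*r^4 + 1) ((-4)*r^2) _ (by rw [hp]; simp only [map_add, map_sub, map_mul, map_pow, map_one, map_ofNat, map_neg, _root_.map_zero]; ring)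
  · have h2y : (2 : Kbar) * y ≠ 0 := mul_ne_zero two_ne_zero hy0
    have hynegY : y ≠ W.negY x y := by
      rw [WeierstrassCurve.Affine.negY, ha₁, ha₃]
      intro hc
      have h20 : (2 : Kbar) * y = 0 := by linear_combination hc
      exact hy0 ((mul_eq_zero.mp h20).resolve_left two_ne_zero)
    have h2P : (2:ℕ) • (WeierstrassCurve.Affine.Point.some x y h) =
        WeierstrassCurve.Affine.Point.some _ _ (nonsingular_add h h fun hxy => hynegY hxy.right) := by
      rw [two_smul]
      exact WeierstrassCurve.Affine.Point.add_self_of_Y_ne hynegY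
    have h4' : WeierstrassCurve.Affine.Point.some _ _ (nonsingular_add h h fun hxy => hynegY hxy.right) +
        WeierstrassCurve.Affine.Point.some _ _ (nonsingular_add h h fun hxy => hynegY hxy.right) = 0 := by
      rw [← h2P, ← two_smul ℕ, ← mul_nsmul']
      exact h4
    have hy₂neg : W.addY x x y (W.slope x x y y) =
        W.negY (W.addX x x (W.slope x x y y)) (W.addY x x y (W.slope x x y y)) := by
      by_contra hne
      rw [WeierstrassCurve.Affine.Point.add_self_of_Y_ne hne] at h4'
      exact WeierstrassCurve.Affine.Point.some_ne_zero _ h4'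
    obtain ⟨l, hl⟩ : ∃ t, W.slope x x y y = t := ⟨_, rfl⟩
    obtain ⟨x₂, hx2⟩ : ∃ t, W.addX x x (W.slope x x y y) = t := ⟨_, rfl⟩
    obtain ⟨y₂, hy2⟩ : ∃ t, W.addY x x y (W.slope x x y y) = t := ⟨_, rfl⟩
    rw [hx2, hy2] at hy₂neg
    have hy₂0 : y₂ = 0 := by
      rw [WeierstrassCurve.Affine.negY, ha₁, ha₃] at hy₂neg
      have h20 : (2 : Kbar) * y₂ = 0 := by linear_combination hy₂neg
      exact (mul_eq_zero.mp h20).resolve_left two_ne_zero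
    have hcube : x₂^3 + (-2*(1-4*p^4))*x₂^2 + ((1+4*p^4)^2)*x₂ = 0 := by
      have h1 := (W.equation_iff _ _).mp (nonsingular_add h h fun hxy => hynegY hxy.right).1
      rw [hx2, hy2, ha₁, ha₂, ha₃, ha₄, ha₆, hy₂0] at h1
      linear_combination -h1
    have hm : l * (2*y) = 3*x^2 + 2*(-2*(1-4*p^4))*x + (1+4*p^4)^2 := by
      rw [← hl, WeierstrassCurve.Affine.slope_of_Y_ne rfl hynegY,
        show y - W.negY x y = 2*y from by
          simp only [WeierstrassCurve.Affine.negY, ha₁, ha₃]; ring,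
        ha₁, ha₂, ha₄, div_mul_cancel₀ _ h2y]
      ring
    have hx₂val : x₂ = l^2 - (-2*(1-4*p^4)) - x - x := by
      rw [← hx2, ← hl]
      simp only [WeierstrassCurve.Affine.addX, ha₁, ha₂]
      ring
    have hx₂mul : x₂ * (2*y)^2 = (x^2 - (1+4*p^4)^2)^2 := by
      rw [hx₂val]
      linear_combination (3*x^2 + 16*x*p^4 + (-4)*x + 2*y*l + 16*p^8 + 8*p^4 + 1)*hm + ((-8)*x + (-32)*p^4 + 8)*heq
    have hfact : x₂ * (x₂ - (4*i*p^2 + (-4)*p^4 + 1)) * (x₂ - ((-4)*i*p^2 + (-4)*p^4 + 1)) = 0 := by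
      linear_combination hcube + ((-16)*p^4*x₂)*hi
    rcases mul_eq_zero.mp hfact with h' | h'
    · rcases mul_eq_zero.mp h' with h'' | h''
      · -- x₂ = 0
        rw [h''] at hx₂mul
        have hsq : (x - (4*p^4 + 1)) * (x + (4*p^4 + 1)) = 0 := by
          have h0 : ((x - (4*p^4 + 1)) * (x + (4*p^4 + 1)))^2 = 0 := by
            linear_combination -hx₂mul
          exact pow_eq_zero_iff (two_ne_zero) |>.mp h0
        rcases mul_eq_zero.mp hsq with hc | hc
        · have hxe : x = (4*p^4 + 1) := by linear_combination hc
          refine ⟨by rw [hxe]; exact memconst (4*r^4 + 1) (0) _ (by rw [hp]; simp only [map_add, map_sub, map_mul, map_pow, map_one, map_ofNat, map_neg, _root_.map_zero]; ring), ?_⟩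
          refine hroot (16*p^6 + 4*p^2) (memconst (16*r^6 + 4*r^2) (0) _ (by rw [hp]; simp only [map_add, map_sub, map_mul, map_pow, map_one, map_ofNat, map_neg, _root_.map_zero]; ring)) ?_
          linear_combination heq + (x^2 + 12*x*p^4 - x + 64*p^8 + 16*p^4)*hxe
        · have hxe : x = ((-4)*p^4 - 1) := by linear_combination hc
          refine ⟨by rw [hxe]; exact memconst ((-4)*r^4 - 1) (0) _ (by rw [hp]; simp only [map_add, map_sub, map_mul, map_pow, map_one, map_ofNat, map_neg, _root_.map_zero]; ring), ?_⟩
          refine hroot (8*i*p^4 + 2*i) (memconst (0) (8*r^4 + 2) _ (by rw [hp]; simp only [map_add, map_sub, map_mul, map_pow, map_one, map_ofNat, map_neg, _root_.map_zero]; ring)) ?_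
          linear_combination heq + (x^2 + 4*x*p^4 + (-3)*x + 16*p^4 + 4)*hxe + ((-64)*p^8 + (-32)*p^4 + (-4))*hi
      · -- x₂ = E1
        have hxe₂ : x₂ = (4*i*p^2 + (-4)*p^4 + 1) := by linear_combination h''
        rw [hxe₂] at hx₂mul
        have hF : ((x - (4*i*p^3 + 4*i*p^2 + 2*i*p + (-4)*p^4 + (-4)*p^3 + 2*p + 1)) * (x - ((-4)*i*p^3 + 4*i*p^2 + (-2)*i*p + (-4)*p^4 + 4*p^3 + (-2)*p + 1)))^2 = 0 := by
          linear_combination (-1 : Kbar)*hx₂mul + (4*(4*i*p^2 + (-4)*p^4 + 1))*heq + ((-32)*x^2*p^6 + 64*x^2*p^4 + (-8)*x^2*p^2 + 256*x*i*p^8 + 64*x*i*p^4 + (-256)*x*p^10 + 16*x*p^2 + 256*i^2*p^12 + 128*i^2*p^8 + 16*i^2*p^4 + (-512)*p^14 + 256*p^12 + (-384)*p^10 + 128*p^8 + (-96)*p^6 + 16*p^4 + (-8)*p^2)*hi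
        rcases mul_eq_zero.mp (pow_eq_zero_iff (two_ne_zero) |>.mp hF) with hc | hc
        · have hxe : x = (4*i*p^3 + 4*i*p^2 + 2*i*p + (-4)*p^4 + (-4)*p^3 + 2*p + 1) := by linear_combination hc
          refine ⟨by rw [hxe]; exact memconst ((-4)*r^4 + (-4)*r^3 + 2*r + 1) (4*r^3 + 4*r^2 + 2*r) _ (by rw [hp]; simp only [map_add, map_sub, map_mul, map_pow, map_one, map_ofNat, map_neg, _root_.map_zero]; ring), ?_⟩
          refine hroot (8*i*p^5 + (-8)*i*p^3 + (-8)*i*p^2 + (-2)*i*p + 8*p^5 + 16*p^4 + 8*p^3 + (-2)*p) (memconst (8*r^5 + 16*r^4 + 8*r^3 + (-2)*r) (8*r^5 + (-8)*r^3 + (-8)*r^2 + (-2)*r) _ (by rw [hp]; simp only [map_add, map_sub, map_mul, map_pow, map_one, map_ofNat, map_neg, _root_.map_zero]; ring)) ?_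
          linear_combination heq + (x^2 + 4*x*i*p^3 + 4*x*i*p^2 + 2*x*i*p + 4*x*p^4 + (-4)*x*p^3 + 2*x*p - x + 16*i^2*p^6 + 32*i^2*p^5 + 32*i^2*p^4 + 16*i^2*p^3 + 4*i^2*p^2 + (-32)*i*p^6 + (-32)*i*p^5 + 16*i*p^3 + 8*i*p^2 + 16*p^6 + 4*p^2)*hxe + (64*i*p^9 + 192*i*p^8 + 288*i*p^7 + 256*i*p^6 + 144*i*p^5 + 48*i*p^4 + 8*i*p^3 + (-128)*p^10 + (-320)*p^9 + (-384)*p^8 + (-224)*p^7 + (-32)*p^6 + 48*p^5 + 32*p^4 + 8*p^3)*hi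
        · have hxe : x = ((-4)*i*p^3 + 4*i*p^2 + (-2)*i*p + (-4)*p^4 + 4*p^3 + (-2)*p + 1) := by linear_combination hc
          refine ⟨by rw [hxe]; exact memconst ((-4)*r^4 + 4*r^3 + (-2)*r + 1) ((-4)*r^3 + 4*r^2 + (-2)*r) _ (by rw [hp]; simp only [map_add, map_sub, map_mul, map_pow, map_one, map_ofNat, map_neg, _root_.map_zero]; ring), ?_⟩
          refine hroot (8*i*p^5 + (-8)*i*p^3 + 8*i*p^2 + (-2)*i*p + 8*p^5 + (-16)*p^4 + 8*p^3 + (-2)*p) (memconst (8*r^5 + (-16)*r^4 + 8*r^3 + (-2)*r) (8*r^5 + (-8)*r^3 + 8*r^2 + (-2)*r) _ (by rw [hp]; simp only [map_add, map_sub, map_mul, map_pow, map_one, map_ofNat, map_neg, _root_.map_zero]; ring)) ?_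
          linear_combination heq + (x^2 + (-4)*x*i*p^3 + 4*x*i*p^2 + (-2)*x*i*p + 4*x*p^4 + 4*x*p^3 + (-2)*x*p - x + 16*i^2*p^6 + (-32)*i^2*p^5 + 32*i^2*p^4 + (-16)*i^2*p^3 + 4*i^2*p^2 + (-32)*i*p^6 + 32*i*p^5 + (-16)*i*p^3 + 8*i*p^2 + 16*p^6 + 4*p^2)*hxe + ((-64)*i*p^9 + 192*i*p^8 + (-288)*i*p^7 + 256*i*p^6 + (-144)*i*p^5 + 48*i*p^4 + (-8)*i*p^3 + (-128)*p^10 + 320*p^9 + (-384)*p^8 + 224*p^7 + (-32)*p^6 + (-48)*p^5 + 32*p^4 + (-8)*p^3)*hi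
    · -- x₂ = E3
      have hxe₂ : x₂ = ((-4)*i*p^2 + (-4)*p^4 + 1) := by linear_combination h'
      rw [hxe₂] at hx₂mul
      have hF : ((x - ((-4)*i*p^3 + (-4)*i*p^2 + (-2)*i*p + (-4)*p^4 + (-4)*p^3 + 2*p + 1)) * (x - (4*i*p^3 + (-4)*i*p^2 + 2*i*p + (-4)*p^4 + 4*p^3 + (-2)*p + 1)))^2 = 0 := by
        linear_combination (-1 : Kbar)*hx₂mul + (4*((-4)*i*p^2 + (-4)*p^4 + 1))*heq + ((-32)*x^2*p^6 + 64*x^2*p^4 + (-8)*x^2*p^2 + (-256)*x*i*p^8 + (-64)*x*i*p^4 + (-256)*x*p^10 + 16*x*p^2 + 256*i^2*p^12 + 128*i^2*p^8 + 16*i^2*p^4 + (-512)*p^14 + 256*p^12 + (-384)*p^10 + 128*p^8 + (-96)*p^6 + 16*p^4 + (-8)*p^2)*hi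
      rcases mul_eq_zero.mp (pow_eq_zero_iff (two_ne_zero) |>.mp hF) with hc | hc
      · have hxe : x = ((-4)*i*p^3 + (-4)*i*p^2 + (-2)*i*p + (-4)*p^4 + (-4)*p^3 + 2*p + 1) := by linear_combination hc
        refine ⟨by rw [hxe]; exact memconst ((-4)*r^4 + (-4)*r^3 + 2*r + 1) ((-4)*r^3 + (-4)*r^2 + (-2)*r) _ (by rw [hp]; simp only [map_add, map_sub, map_mul, map_pow, map_one, map_ofNat, map_neg, _root_.map_zero]; ring), ?_⟩
        refine hroot ((-8)*i*p^5 + 8*i*p^3 + 8*i*p^2 + 2*i*p + 8*p^5 + 16*p^4 + 8*p^3 + (-2)*p) (memconst (8*r^5 + 16*r^4 + 8*r^3 + (-2)*r) ((-8)*r^5 + 8*r^3 + 8*r^2 + 2*r) _ (by rw [hp]; simp only [map_add, map_sub, map_mul, map_pow, map_one, map_ofNat, map_neg, _root_.map_zero]; ring)) ?_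
        linear_combination heq + (x^2 + (-4)*x*i*p^3 + (-4)*x*i*p^2 + (-2)*x*i*p + 4*x*p^4 + (-4)*x*p^3 + 2*x*p - x + 16*i^2*p^6 + 32*i^2*p^5 + 32*i^2*p^4 + 16*i^2*p^3 + 4*i^2*p^2 + 32*i*p^6 + 32*i*p^5 + (-16)*i*p^3 + (-8)*i*p^2 + 16*p^6 + 4*p^2)*hxe + ((-64)*i*p^9 + (-192)*i*p^8 + (-288)*i*p^7 + (-256)*i*p^6 + (-144)*i*p^5 + (-48)*i*p^4 + (-8)*i*p^3 + (-128)*p^10 + (-320)*p^9 + (-384)*p^8 + (-224)*p^7 + (-32)*p^6 + 48*p^5 + 32*p^4 + 8*p^3)*hi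
      · have hxe : x = (4*i*p^3 + (-4)*i*p^2 + 2*i*p + (-4)*p^4 + 4*p^3 + (-2)*p + 1) := by linear_combination hc
        refine ⟨by rw [hxe]; exact memconst ((-4)*r^4 + 4*r^3 + (-2)*r + 1) (4*r^3 + (-4)*r^2 + 2*r) _ (by rw [hp]; simp only [map_add, map_sub, map_mul, map_pow, map_one, map_ofNat, map_neg, _root_.map_zero]; ring), ?_⟩
        refine hroot ((-8)*i*p^5 + 8*i*p^3 + (-8)*i*p^2 + 2*i*p + 8*p^5 + (-16)*p^4 + 8*p^3 + (-2)*p) (memconst (8*r^5 + (-16)*r^4 + 8*r^3 + (-2)*r) ((-8)*r^5 + 8*r^3 + (-8)*r^2 + 2*r) _ (by rw [hp]; simp only [map_add, map_sub, map_mul, map_pow, map_one, map_ofNat, map_neg, _root_.map_zero]; ring)) ?_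
        linear_combination heq + (x^2 + 4*x*i*p^3 + (-4)*x*i*p^2 + 2*x*i*p + 4*x*p^4 + 4*x*p^3 + (-2)*x*p - x + 16*i^2*p^6 + (-32)*i^2*p^5 + 32*i^2*p^4 + (-16)*i^2*p^3 + 4*i^2*p^2 + 32*i*p^6 + (-32)*i*p^5 + 16*i*p^3 + (-8)*i*p^2 + 16*p^6 + 4*p^2)*hxe + (64*i*p^9 + (-192)*i*p^8 + 288*i*p^7 + (-256)*i*p^6 + 144*i*p^5 + (-48)*i*p^4 + 8*i*p^3 + (-128)*p^10 + 320*p^9 + (-384)*p^8 + 224*p^7 + (-32)*p^6 + (-48)*p^5 + 32*p^4 + (-8)*p^3)*hi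

open Classical in
set_option maxHeartbeats 1000000 in
private lemma i_mem_two {r : ℚ} (hr : r ≠ 0) {i : Kbar} (hi : i ^ 2 = -1) :
    i ∈ divisionField (Er r) 2 := by
  set W : WeierstrassCurve.Affine Kbar := ((Er r).baseChange Kbar).toAffine with hW
  set p : Kbar := algebraMap ℚ Kbar r with hp
  have ha₁ : W.a₁ = 0 := by simp [hW, Er]
  have ha₃ : W.a₃ = 0 := by simp [hW, Er]
  have ha₆ : W.a₆ = 0 := by simp [hW, Er]
  have ha₂ : W.a₂ = -2*(1-4*p^4) := by
    rw [hp, hW]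
    simp only [WeierstrassCurve.baseChange, WeierstrassCurve.map_a₂, Er, map_neg, map_mul, map_sub,
      map_one, map_ofNat, map_pow]
  have ha₄ : W.a₄ = (1+4*p^4)^2 := by
    rw [hp, hW]
    simp only [WeierstrassCurve.baseChange, WeierstrassCurve.map_a₄, Er, map_add, map_mul,
      map_one, map_ofNat, map_pow]
  have hEq : W.Equation (4*i*p^2 + (-4)*p^4 + 1) 0 := by
    rw [W.equation_iff]
    rw [ha₁, ha₂, ha₃, ha₄, ha₆]
    linear_combination ((-64)*i*p^6 + 64*p^8 + (-16)*p^4)*hi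
  have hΔ : W.Δ ≠ 0 := by
    have hd : (Er r).Δ = -1024*r^4*(1+4*r^4)^4 := by
      simp only [WeierstrassCurve.Δ, WeierstrassCurve.b₂, WeierstrassCurve.b₄,
        WeierstrassCurve.b₆, WeierstrassCurve.b₈, Er]
      ring
    have hmap : W.Δ = algebraMap ℚ Kbar ((Er r).Δ) := by
      rw [hW]; exact (Er r).map_Δ _
    rw [hmap, hd]
    simp only [ne_eq, map_eq_zero]
    intro hc
    have h1 : (1 + 4*r^4 : ℚ) ≠ 0 := by positivity
    have := mul_ne_zero (mul_ne_zero (by norm_num : (-1024 : ℚ) ≠ 0) (pow_ne_zero 4 hr))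
      (pow_ne_zero 4 h1)
    exact this hc
  have hNS : W.Nonsingular (4*i*p^2 + (-4)*p^4 + 1) 0 := (W.equation_iff_nonsingular_of_Δ_ne_zero hΔ).mp hEq
  have h2t : (2:ℕ) • (WeierstrassCurve.Affine.Point.some _ _ hNS) =
      (0 : W.Point) := by
    rw [two_smul]
    exact WeierstrassCurve.Affine.Point.add_self_of_Y_eq (by
      rw [WeierstrassCurve.Affine.negY, ha₁, ha₃]; ring)
  have hE1mem : ((4*i*p^2 + (-4)*p^4 + 1) : Kbar) ∈ divisionField (Er r) 2 := by
    unfold divisionField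
    exact subset_adjoin ℚ _ ⟨(4*i*p^2 + (-4)*p^4 + 1), 0, hNS, h2t, Or.inl rfl⟩
  have hp0 : p ≠ 0 := by
    rw [hp]
    simpa only [ne_eq, map_eq_zero] using hr
  have h4p : (4 : Kbar) * p^2 ≠ 0 := by
    apply mul_ne_zero _ (pow_ne_zero 2 hp0)
    exact_mod_cast (by norm_num : (4:ℚ) ≠ 0)
  have hieq : i = (((4*i*p^2 + (-4)*p^4 + 1) : Kbar) - 1 + 4*p^4) * (4*p^2)⁻¹ := by
    rw [eq_mul_inv_iff_mul_eq₀ h4p]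
    ring
  have hm4 : (4 : Kbar) ∈ divisionField (Er r) 2 := by
    rw [show (4 : Kbar) = algebraMap ℚ Kbar 4 from (map_ofNat _ 4).symm]
    exact (divisionField (Er r) 2).algebraMap_mem 4
  have hmp : p ∈ divisionField (Er r) 2 := by
    rw [hp]; exact (divisionField (Er r) 2).algebraMap_mem r
  rw [hieq]
  exact mul_mem (add_mem (sub_mem hE1mem (one_mem _)) (mul_mem hm4 (pow_mem hmp 4)))
    (inv_mem (mul_mem hm4 (pow_mem hmp 2)))

/-- For every nonzero rational `r`, the elliptic curve `E_r` over `ℚ`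
satisfies `Z_{E_r/ℚ}(2) = Z_{E_r/ℚ}(4) = ℚ(i)`, where `i` is an element of the fixed
algebraic closure of `ℚ` with `i² = −1`. -/
theorem statement15 (r : ℚ) (hr : r ≠ 0) (i : AlgebraicClosure ℚ) (hi : i ^ 2 = -1) :
    divisionField (Er r) 2 = IntermediateField.adjoin ℚ {i} ∧
    divisionField (Er r) 4 = IntermediateField.adjoin ℚ {i} := by
  have hile : adjoin ℚ {i} ≤ divisionField (Er r) 2 := by
    refine adjoin_le_iff.mpr ?_
    intro c hc
    rw [Set.mem_singleton_iff] at hc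
    subst hc
    exact i_mem_two hr hi
  have h24 : divisionField (Er r) 2 ≤ divisionField (Er r) 4 := by
    unfold divisionField
    rw [adjoin_le_iff]
    rintro c ⟨x, y, hns, h2, hc⟩
    exact subset_adjoin ℚ _ ⟨x, y, hns, by
      classical
      rw [show (4:ℕ) = 2*2 from rfl, mul_nsmul, h2, two_smul ℕ]; exact add_zero 0, hc⟩
  have h4i : divisionField (Er r) 4 ≤ adjoin ℚ {i} := by
    unfold divisionField
    refine adjoin_le_iff.mpr ?_
    rintro c ⟨x, y, hns, h4, rfl | rfl⟩
    · exact (torsion_coords hr hi hns h4).1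
    · exact (torsion_coords hr hi hns h4).2
  exact ⟨le_antisymm (h24.trans h4i) hile, le_antisymm h4i (hile.trans h24)⟩
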